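/- Let F be a field of characteristic 0 and n ≥ 2. The element x = e_{11} - e_{22} + i(e_{33} - e_{44}) in M_n(F) (n ≥ 4, i a square root of -1 in F) satisfies e_{12}x + xe_{12} + λ tr(x) e_{12} + μ tr(x e_{12})·1 = 0 for all λ, μ ∈ F, but w(x²) ≠ 0 where w(y) = e_{12}y + ye_{12} + λ tr(y)e_{12} + μ tr(y e_{12})·1, provided λ ≠ -2/n and μ = -2λ/(nλ+2). That is, x ∈ ker(w) but x² ∉ ker(w), so ker(w) is not a subalgebra. -/

import Mathlib

/-- For x = e₁₁ - e₂₂ + i(e₃₃ - e₄₄) (i² = -1, n ≥ 4) and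
w(y) = e₁₂y + ye₁₂ + λ tr(y) e₁₂ + μ tr(y e₁₂) 1 (λ ≠ -2/n, μ = -2λ/(nλ+2)),
we have w(x) = 0 for all λ, μ, but w(x²) ≠ 0; so ker(w) is not a subalgebra. -/
theorem stmt_18 (F : Type*) [Field F] [CharZero F] (n : ℕ) (hn : 4 ≤ n)
    (i : F) (hi : i ^ 2 = -1)
    (lam : F) (hlam : lam ≠ -2 / (n : F))
    (mu : F) (hmu : mu = -2 * lam / ((n : F) * lam + 2))
    (e : Fin n → Fin n → Matrix (Fin n) (Fin n) F)
    (he : ∀ j k, e j k = Matrix.single j k (1 : F))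
    (x : Matrix (Fin n) (Fin n) F)
    (hx : x = e ⟨0, by omega⟩ ⟨0, by omega⟩ - e ⟨1, by omega⟩ ⟨1, by omega⟩
      + i • (e ⟨2, by omega⟩ ⟨2, by omega⟩ - e ⟨3, by omega⟩ ⟨3, by omega⟩))
    (w : F → F → Matrix (Fin n) (Fin n) F → Matrix (Fin n) (Fin n) F)
    (hw : ∀ lam' mu' y, w lam' mu' y =
      e ⟨0, by omega⟩ ⟨1, by omega⟩ * y + y * e ⟨0, by omega⟩ ⟨1, by omega⟩
      + (lam' * Matrix.trace y) • e ⟨0, by omega⟩ ⟨1, by omega⟩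
      + (mu' * Matrix.trace (y * e ⟨0, by omega⟩ ⟨1, by omega⟩))
          • (1 : Matrix (Fin n) (Fin n) F)) :
    (∀ lam' mu' : F, w lam' mu' x = 0) ∧ w lam mu (x * x) ≠ 0 := by
  subst hx
  constructor
  · intro lam' mu'
    rw [hw]
    simp [he, mul_sub, sub_mul, mul_add, add_mul, Matrix.mul_smul, Matrix.smul_mul,
      Matrix.single_mul_single_same, Matrix.single_mul_single_of_ne,
      Matrix.trace_single_eq_same, Matrix.trace_single_eq_of_ne, Fin.mk.injEq]
  · rw [hw]
    simp [he, mul_sub, sub_mul, mul_add, add_mul, Matrix.mul_smul, Matrix.smul_mul,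
      Matrix.single_mul_single_same, Matrix.single_mul_single_of_ne,
      Matrix.trace_single_eq_same, Matrix.trace_single_eq_of_ne, Fin.mk.injEq]
    intro h
    have hii : i * i = -1 := by rw [← sq]; exact hi
    have h2 := congrFun (congrFun h ⟨0, by omega⟩) ⟨1, by omega⟩
    simp [Matrix.add_apply, Matrix.single_apply_same, hii] at h2
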